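/- Let {z_i}_{i=1}^{r+s} be an orthonormal basis of ℝ^{r,s} and U an admissible Cl(r,s)-module. Suppose a linear map A : U → U satisfies Aᵀ J_{z_{k₀}} A = J_{z_{k₀}} for a single index k₀ and A J_{z_{k₀}} J_{z_l} = J_{z_{k₀}} J_{z_l} A for all l = 1,...,r+s. Then Aᵀ J_{z_l} A = J_{z_l} for every l = 1,...,r+s, i.e., A ⊕ Id is an automorphism of n_{r,s}(U). -/
import Mathlib


noncomputable section

/-- The standard bilinear form of signature `(r,s)` on `ℝ^{r+s}` (the polarization of
`Q_{r,s}`). -/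
def Brs (r s : ℕ) (x y : Fin (r + s) → ℝ) : ℝ :=
  ∑ i : Fin (r + s), (if (i : ℕ) < r then (1 : ℝ) else -1) * x i * y i

/-- The quadratic form generating the Clifford algebra `Cl_{r,s}` with the paper's convention
`z ⊗ z + ⟨z,z⟩_{r,s} = 0`, i.e. `ι z * ι z = -⟨z,z⟩_{r,s} • 1`. -/
def Qrs (r s : ℕ) : QuadraticForm ℝ (Fin (r + s) → ℝ) :=
  QuadraticMap.weightedSumSquares ℝ (fun i : Fin (r + s) => if (i : ℕ) < r then (-1 : ℝ) else 1)
/-- If `Aᵀ J_{z_{k₀}} A = J_{z_{k₀}}` for a single basis index `k₀` and `A` commutes with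
all `J_{z_{k₀}} J_{z_l}`, then `Aᵀ J_{z_l} A = J_{z_l}` for every `l`, i.e. `A ⊕ Id` is an
automorphism of `n_{r,s}(U)`. -/
theorem stmt12 (r s : ℕ) (U : Type*) [AddCommGroup U] [Module ℝ U]
    (BU : U →ₗ[ℝ] U →ₗ[ℝ] ℝ)
    (hsymm : ∀ x y, BU x y = BU y x)
    (hnd : ∀ x, (∀ y, BU x y = 0) → x = 0)
    (J : (Fin (r + s) → ℝ) →ₗ[ℝ] Module.End ℝ U)
    (hJ2 : ∀ z, J z * J z = (-(Brs r s z z)) • (1 : Module.End ℝ U))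
    (hadm : ∀ z x y, BU (J z x) y + BU x (J z y) = 0)
    (zs : Fin (r + s) → (Fin (r + s) → ℝ))
    (horth : ∀ i j, i ≠ j → Brs r s (zs i) (zs j) = 0)
    (hunit : ∀ i, Brs r s (zs i) (zs i) = 1 ∨ Brs r s (zs i) (zs i) = -1)
    (A : U →ₗ[ℝ] U) (A' : U →ₗ[ℝ] U)
    (hA' : ∀ x y, BU (A x) y = BU x (A' y))
    (k₀ : Fin (r + s))
    (hk₀ : ∀ x, A' (J (zs k₀) (A x)) = J (zs k₀) x)
    (hcomm : ∀ l x, A (J (zs k₀) (J (zs l) x)) = J (zs k₀) (J (zs l) (A x))) :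
    ∀ l x, A' (J (zs l) (A x)) = J (zs l) x := by
  intro l x
  set ε := Brs r s (zs k₀) (zs k₀) with hε
  have hε2 : ε * ε = 1 := by
    rcases hunit k₀ with h | h <;> rw [← hε] at h <;> rw [h] <;> ring
  have hK2 : ∀ u, J (zs k₀) (J (zs k₀) u) = (-ε) • u := by
    intro u
    have := congrArg (fun f : Module.End ℝ U => f u) (hJ2 (zs k₀))
    simpa [Module.End.mul_apply] using this
  have key : J (zs l) (A x) = (-ε) • J (zs k₀) (A (J (zs k₀) (J (zs l) x))) := by
    rw [hcomm, hK2, smul_smul]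
    simp [neg_mul, hε2]
  calc A' (J (zs l) (A x))
      = A' ((-ε) • J (zs k₀) (A (J (zs k₀) (J (zs l) x)))) := by rw [key]
    _ = (-ε) • A' (J (zs k₀) (A (J (zs k₀) (J (zs l) x)))) := map_smul _ _ _
    _ = (-ε) • J (zs k₀) (J (zs k₀) (J (zs l) x)) := by rw [hk₀]
    _ = (-ε) • ((-ε) • J (zs l) x) := by rw [hK2]
    _ = J (zs l) x := by rw [smul_smul]; simp [neg_mul, hε2]
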